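/- Let G be a second-countable profinite group, μ the normalized Haar probability measure on G, T : G → G a quotient-preserving map, and let F ⊆ F(T) be a collection of open normal subgroups of G forming a base of neighborhoods of the identity, each element of which T factors through. Then T is measure-preserving with respect to μ if and only if for every N ∈ F the induced map T_N : G/N → G/N is bijective; equivalently, if and only if for every N ∈ F and all x, y ∈ G, (T x)⁻¹(T y) ∈ N implies x⁻¹y ∈ N. -/

import Mathlib

open MeasureTheory

/-- `T` factors through the quotient map `G → G/N`. -/
def MapFactorsThrough {G : Type*} [Group G] (T : G → G) (N : Subgroup G) : Prop :=
  ∀ x y : G, x⁻¹ * y ∈ N → (T x)⁻¹ * T y ∈ N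

/-- `T` is a quotient-preserving map: the open normal subgroups through whose quotient
maps `T` factors contain a base of neighborhoods of the identity. -/
def QuotientPreserving {G : Type*} [Group G] [TopologicalSpace G] (T : G → G) : Prop :=
  ∀ U ∈ nhds (1 : G), ∃ N : Subgroup G,
    N.Normal ∧ IsOpen (N : Set G) ∧ (N : Set G) ⊆ U ∧ MapFactorsThrough T N

section Aux

set_option linter.unusedSectionVars false

variable {G : Type*} [Group G] [TopologicalSpace G] [IsTopologicalGroup G]

/-- A quotient-preserving map is continuous. -/
lemma continuous_of_quotientPreserving (T : G → G) (hT : QuotientPreserving T) :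
    Continuous T := by
  rw [continuous_iff_continuousAt]
  intro x
  rw [ContinuousAt, Filter.tendsto_def]
  intro U hU
  have hW : (fun g => T x * g) ⁻¹' U ∈ nhds (1 : G) := by
    have h1 : Filter.Tendsto (fun g => T x * g) (nhds 1) (nhds (T x)) := by
      simpa using (continuous_mul_left (T x)).tendsto 1
    exact h1 hU
  obtain ⟨N, -, hNo, hNU, hfac⟩ := hT _ hW
  have hmem : (fun y => x⁻¹ * y) ⁻¹' (N : Set G) ∈ nhds x :=
    (hNo.preimage (continuous_mul_left x⁻¹)).mem_nhds (by simp [N.one_mem])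
  refine Filter.mem_of_superset hmem ?_
  intro y hy
  have h2 : (T x)⁻¹ * T y ∈ N := hfac x y hy
  have h3 := hNU h2
  simpa using h3

/-- The preimage of a singleton under the quotient map is a left coset. -/
lemma preimage_mk_singleton (N : Subgroup G) (g : G) :
    (QuotientGroup.mk ⁻¹' {(QuotientGroup.mk g : G ⧸ N)}) =
      (fun y => g⁻¹ * y) ⁻¹' (N : Set G) := by
  ext y
  simp only [Set.mem_preimage, Set.mem_singleton_iff, SetLike.mem_coe]
  rw [QuotientGroup.eq]
  constructor
  · intro h
    simpa using N.inv_mem h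
  · intro h
    simpa using N.inv_mem h

variable [MeasurableSpace G] [BorelSpace G]

lemma measurableSet_preimage_mk {N : Subgroup G} (hNo : IsOpen (N : Set G))
    (Q : Set (G ⧸ N)) : MeasurableSet (QuotientGroup.mk ⁻¹' Q) := by
  have : IsOpen (QuotientGroup.mk ⁻¹' Q : Set G) := by
    have : (QuotientGroup.mk ⁻¹' Q : Set G) =
        ⋃ q ∈ Q, QuotientGroup.mk ⁻¹' {q} := by
      ext y; simp
    rw [this]
    refine isOpen_biUnion fun q hq => ?_
    induction q using QuotientGroup.induction_on with
    | H g =>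
      rw [preimage_mk_singleton]
      exact hNo.preimage (continuous_mul_left g⁻¹)
  exact this.measurableSet

lemma measure_preimage_mk_singleton (μ : Measure G) [μ.IsMulLeftInvariant]
    (N : Subgroup G) (q : G ⧸ N) :
    μ (QuotientGroup.mk ⁻¹' {q}) = μ (N : Set G) := by
  induction q using QuotientGroup.induction_on with
  | H g =>
    rw [preimage_mk_singleton]
    exact measure_preimage_mul μ g⁻¹ _

/-- The measure of the preimage of a set `Q ⊆ G/N` is `#Q · μ(N)`. -/
lemma measure_preimage_mk (μ : Measure G) [μ.IsMulLeftInvariant]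
    {N : Subgroup G} (hNo : IsOpen (N : Set G)) [Finite (G ⧸ N)] (Q : Set (G ⧸ N)) :
    μ (QuotientGroup.mk ⁻¹' Q) = (Q.ncard : ENNReal) * μ (N : Set G) := by
  have hQfin : Q.Finite := Set.toFinite Q
  have hdecomp : (QuotientGroup.mk ⁻¹' Q : Set G) =
      ⋃ q ∈ hQfin.toFinset, QuotientGroup.mk ⁻¹' {q} := by
    ext y; simp
  rw [hdecomp]
  rw [measure_biUnion_finset ?_ ?_]
  · rw [Finset.sum_congr rfl
      (fun q _ => measure_preimage_mk_singleton μ N q)]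
    rw [Finset.sum_const, Set.ncard_eq_toFinset_card Q hQfin, nsmul_eq_mul]
  · intro a _ b _ hab
    rw [Function.onFun, Set.disjoint_left]
    intro y hy1 hy2
    exact hab (by
      simp only [Set.mem_preimage, Set.mem_singleton_iff] at hy1 hy2
      rw [← hy1, ← hy2])
  · intro q _
    exact measurableSet_preimage_mk hNo {q}

end Aux

theorem stmt3 {G : Type*} [Group G] [TopologicalSpace G] [IsTopologicalGroup G]
    [CompactSpace G] [T2Space G] [TotallyDisconnectedSpace G] [SecondCountableTopology G]
    [MeasurableSpace G] [BorelSpace G]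
    (μ : Measure G) [μ.IsHaarMeasure] [IsProbabilityMeasure μ]
    (T : G → G) (hT : QuotientPreserving T)
    (𝓕 : Set (Subgroup G))
    (h𝓕 : ∀ N ∈ 𝓕, N.Normal ∧ IsOpen (N : Set G) ∧ MapFactorsThrough T N)
    (hbase : ∀ U ∈ nhds (1 : G), ∃ N ∈ 𝓕, (N : Set G) ⊆ U) :
    ((∀ S : Set G, MeasurableSet S → μ (T ⁻¹' S) = μ S) ↔
      ∀ N ∈ 𝓕, ∃ TN : G ⧸ N → G ⧸ N, Function.Bijective TN ∧
        ∀ x : G, TN (QuotientGroup.mk x) = QuotientGroup.mk (T x)) ∧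
    ((∀ S : Set G, MeasurableSet S → μ (T ⁻¹' S) = μ S) ↔
      ∀ N ∈ 𝓕, ∀ x y : G, (T x)⁻¹ * T y ∈ N → x⁻¹ * y ∈ N) := by
  have hTc : Continuous T := continuous_of_quotientPreserving T hT
  -- Step 1: measure-preserving → quotients bijective
  have h1 : (∀ S : Set G, MeasurableSet S → μ (T ⁻¹' S) = μ S) →
      ∀ N ∈ 𝓕, ∃ TN : G ⧸ N → G ⧸ N, Function.Bijective TN ∧
        ∀ x : G, TN (QuotientGroup.mk x) = QuotientGroup.mk (T x) := by
    intro hP N hN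
    obtain ⟨hnorm, hNo, hfac⟩ := h𝓕 N hN
    have : Finite (G ⧸ N) := Subgroup.quotient_finite_of_isOpen N hNo
    refine ⟨Quotient.map' T (fun a b h => QuotientGroup.leftRel_apply.mpr
      (hfac a b (QuotientGroup.leftRel_apply.mp h))), ?_, fun x => rfl⟩
    rw [← Finite.surjective_iff_bijective]
    intro q
    induction q using QuotientGroup.induction_on with
    | H g =>
      set S : Set G := QuotientGroup.mk ⁻¹' {(QuotientGroup.mk g : G ⧸ N)} with hSdef
      have hSmeas : MeasurableSet S := measurableSet_preimage_mk hNo _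
      have hSopen : IsOpen S := by
        rw [hSdef, preimage_mk_singleton]
        exact hNo.preimage (continuous_mul_left g⁻¹)
      have hSpos : 0 < μ S := hSopen.measure_pos μ ⟨g, by simp [hSdef]⟩
      have hTpos : 0 < μ (T ⁻¹' S) := by rw [hP S hSmeas]; exact hSpos
      obtain ⟨x, hx⟩ := MeasureTheory.nonempty_of_measure_ne_zero hTpos.ne'
      refine ⟨QuotientGroup.mk x, ?_⟩
      simpa [hSdef] using hx
  -- Step 2: quotients bijective → injectivity condition
  have h2 : (∀ N ∈ 𝓕, ∃ TN : G ⧸ N → G ⧸ N, Function.Bijective TN ∧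
        ∀ x : G, TN (QuotientGroup.mk x) = QuotientGroup.mk (T x)) →
      ∀ N ∈ 𝓕, ∀ x y : G, (T x)⁻¹ * T y ∈ N → x⁻¹ * y ∈ N := by
    intro hA N hN x y hxy
    obtain ⟨TN, hbij, hcomm⟩ := hA N hN
    have h3 : (QuotientGroup.mk (T x) : G ⧸ N) = QuotientGroup.mk (T y) :=
      (QuotientGroup.eq).mpr hxy
    have h4 : TN (QuotientGroup.mk x) = TN (QuotientGroup.mk y) := by
      rw [hcomm x, hcomm y, h3]
    exact (QuotientGroup.eq).mp (hbij.injective h4)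
  -- Step 3: injectivity condition → quotients bijective
  have h3 : (∀ N ∈ 𝓕, ∀ x y : G, (T x)⁻¹ * T y ∈ N → x⁻¹ * y ∈ N) →
      ∀ N ∈ 𝓕, ∃ TN : G ⧸ N → G ⧸ N, Function.Bijective TN ∧
        ∀ x : G, TN (QuotientGroup.mk x) = QuotientGroup.mk (T x) := by
    intro hB N hN
    obtain ⟨hnorm, hNo, hfac⟩ := h𝓕 N hN
    have : Finite (G ⧸ N) := Subgroup.quotient_finite_of_isOpen N hNo
    refine ⟨Quotient.map' T (fun a b h => QuotientGroup.leftRel_apply.mpr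
      (hfac a b (QuotientGroup.leftRel_apply.mp h))), ?_, fun x => rfl⟩
    rw [← Finite.injective_iff_bijective]
    intro q1 q2 h
    induction q1 using QuotientGroup.induction_on with
    | H x =>
    induction q2 using QuotientGroup.induction_on with
    | H y =>
      have h5 : (QuotientGroup.mk (T x) : G ⧸ N) = QuotientGroup.mk (T y) := h
      exact (QuotientGroup.eq).mpr (hB N hN x y ((QuotientGroup.eq).mp h5))
  -- Step 4: quotients bijective → measure-preserving
  have h4 : (∀ N ∈ 𝓕, ∃ TN : G ⧸ N → G ⧸ N, Function.Bijective TN ∧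
        ∀ x : G, TN (QuotientGroup.mk x) = QuotientGroup.mk (T x)) →
      ∀ S : Set G, MeasurableSet S → μ (T ⁻¹' S) = μ S := by
    intro hA
    have hTm : Measurable T := hTc.measurable
    suffices hmap : Measure.map T μ = μ by
      intro S hS
      rw [← Measure.map_apply hTm hS, hmap]
    have hmapProb : IsProbabilityMeasure (Measure.map T μ) :=
      Measure.isProbabilityMeasure_map hTm.aemeasurable
    refine ext_of_generate_finite { s : Set G | IsClopen s }
      ((BorelSpace.measurable_eq).trans
        (TopologicalSpace.IsTopologicalBasis.borel_eq_generateFrom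
          isTopologicalBasis_isClopen))
      (fun s hs t ht _ => hs.inter ht) ?_ (by simp)
    intro s hs
    rw [Measure.map_apply hTm hs.isOpen.measurableSet]
    -- decompose s as a union of cosets of some N ∈ 𝓕
    have key : ∀ x ∈ s, ∃ N ∈ 𝓕, ∀ n ∈ N, x * n ∈ s := by
      intro x hx
      have hU : (fun g => x * g) ⁻¹' s ∈ nhds (1 : G) :=
        (hs.isOpen.preimage (continuous_mul_left x)).mem_nhds (by simpa using hx)
      obtain ⟨N, hN𝓕, hNsub⟩ := hbase _ hU
      exact ⟨N, hN𝓕, fun n hn => hNsub hn⟩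
    classical
    choose! Nx hNx1 hNx2 using key
    have hScpt : IsCompact s := hs.isClosed.isCompact
    have hcover : s ⊆ ⋃ x ∈ s, (fun y => x⁻¹ * y) ⁻¹' (Nx x : Set G) := by
      intro x hx
      refine Set.mem_biUnion hx ?_
      simp [(Nx x).one_mem]
    obtain ⟨t, hts, htfin, htcov⟩ := hScpt.elim_finite_subcover_image
      (fun x hx => ((h𝓕 (Nx x) (hNx1 x hx)).2.1).preimage (continuous_mul_left x⁻¹))
      hcover
    have hV : (⋂ x ∈ t, (Nx x : Set G)) ∈ nhds (1 : G) := by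
      refine (Filter.biInter_mem htfin).mpr fun x hx => ?_
      exact ((h𝓕 (Nx x) (hNx1 x (hts hx))).2.1).mem_nhds ((Nx x).one_mem)
    obtain ⟨N, hN𝓕, hNsub⟩ := hbase _ hV
    obtain ⟨hnorm, hNo, hfac⟩ := h𝓕 N hN𝓕
    have : Finite (G ⧸ N) := Subgroup.quotient_finite_of_isOpen N hNo
    -- s is saturated for N
    have hsat : ∀ x ∈ s, ∀ y : G, x⁻¹ * y ∈ N → y ∈ s := by
      intro x hx y hxy
      obtain ⟨xi, hxi, hxmem⟩ := Set.mem_iUnion₂.mp (htcov hx)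
      have hxiN : xi⁻¹ * x ∈ Nx xi := hxmem
      have hyN : xi⁻¹ * y ∈ Nx xi := by
        have hN' : x⁻¹ * y ∈ Nx xi := by
          have := hNsub hxy
          exact Set.mem_iInter₂.mp this xi hxi
        have : (xi⁻¹ * x) * (x⁻¹ * y) ∈ Nx xi := (Nx xi).mul_mem hxiN hN'
        simpa [mul_assoc] using this
      have := hNx2 xi (hts hxi) (xi⁻¹ * y) hyN
      simpa using this
    obtain ⟨TN, hbij, hcomm⟩ := hA N hN𝓕
    set Q : Set (G ⧸ N) := QuotientGroup.mk '' s with hQdef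
    have hseq : s = QuotientGroup.mk ⁻¹' Q := by
      ext y
      constructor
      · intro hy; exact ⟨y, hy, rfl⟩
      · rintro ⟨x, hx, hxy⟩
        exact hsat x hx y ((QuotientGroup.eq).mp hxy)
    have hTeq : T ⁻¹' s = QuotientGroup.mk ⁻¹' (TN ⁻¹' Q) := by
      ext y
      simp only [Set.mem_preimage]
      rw [hcomm y]
      constructor
      · intro hy
        exact ⟨T y, hy, rfl⟩
      · rintro ⟨x, hx, hxy⟩
        exact hsat x hx (T y) ((QuotientGroup.eq).mp hxy)
    rw [hTeq, hseq, measure_preimage_mk μ hNo, measure_preimage_mk μ hNo]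
    congr 2
    calc (TN ⁻¹' Q).ncard
        = (TN '' (TN ⁻¹' Q)).ncard :=
          (Set.ncard_image_of_injective _ hbij.injective).symm
      _ = Q.ncard := by rw [Set.image_preimage_eq Q hbij.surjective]
  exact ⟨⟨h1, h4⟩, ⟨fun hP => h2 (h1 hP), fun hB => h4 (h3 hB)⟩⟩
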